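/- arXiv:2310.04063 — 4 statements merged into one kernel-verified Lean document; each statement's English description precedes it below -/
import Mathlib

section
/- Let A ∈ ℂ^{p×q} and B ∈ ℂ^{q×r}. The equality X = AB holds if and only if there exist Hermitian positive semidefinite matrices S ∈ ℂ^{p×p} and T ∈ ℂ^{r×r} such that the block matrix [[S, X, A],[Xᴴ, T, Bᴴ],[Aᴴ, B, I_q]] is positive semidefinite and Tr(S - AAᴴ) ≤ 0. -/
open Matrix ComplexOrder

/-- Lemma 1: `X = A * B` iff there exist PSD matrices `S`, `T` such that the block matrix
`[[S, X, A], [Xᴴ, T, Bᴴ], [Aᴴ, B, I]]` is PSD and `Tr(S - A Aᴴ) ≤ 0`. -/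
theorem stmt_4 (p q r : ℕ)
    (X : Matrix (Fin p) (Fin r) ℂ) (A : Matrix (Fin p) (Fin q) ℂ)
    (B : Matrix (Fin q) (Fin r) ℂ) :
    X = A * B ↔
      ∃ (S : Matrix (Fin p) (Fin p) ℂ) (T : Matrix (Fin r) (Fin r) ℂ),
        S.PosSemidef ∧ T.PosSemidef ∧
        (Matrix.fromBlocks S (Matrix.fromCols X A)
            (Matrix.fromRows Xᴴ Aᴴ)
            (Matrix.fromBlocks T Bᴴ B (1 : Matrix (Fin q) (Fin q) ℂ))).PosSemidef ∧
        ((S - A * Aᴴ).trace).re ≤ 0 := by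
  -- A reformulation of the PSD condition via the Schur complement w.r.t. the bottom-right `1`.
  have key : ∀ (S : Matrix (Fin p) (Fin p) ℂ) (T : Matrix (Fin r) (Fin r) ℂ),
      (Matrix.fromBlocks S (Matrix.fromCols X A)
            (Matrix.fromRows Xᴴ Aᴴ)
            (Matrix.fromBlocks T Bᴴ B (1 : Matrix (Fin q) (Fin q) ℂ))).PosSemidef ↔
        (Matrix.fromBlocks (S - A * Aᴴ) (X - A * B) (Xᴴ - Bᴴ * Aᴴ)
          (T - Bᴴ * B)).PosSemidef := by
    intro S T
    set e := Equiv.sumAssoc (Fin p) (Fin r) (Fin q)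
    set N := Matrix.fromBlocks S (Matrix.fromCols X A)
            (Matrix.fromRows Xᴴ Aᴴ)
            (Matrix.fromBlocks T Bᴴ B (1 : Matrix (Fin q) (Fin q) ℂ))
    have hsub : N.submatrix e e =
        Matrix.fromBlocks (Matrix.fromBlocks S X Xᴴ T)
          (Matrix.fromRows A Bᴴ) (Matrix.fromRows A Bᴴ)ᴴ 1 := by
      ext (i | i) (j | j)
      · rcases i with i | i <;> rcases j with j | j <;>
          simp [N, e, Matrix.conjTranspose_fromRows_eq_fromCols_conjTranspose]
      · rcases i with i | i <;>
          simp [N, e, Matrix.conjTranspose_fromRows_eq_fromCols_conjTranspose]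
      · rcases j with j | j <;>
          simp [N, e, Matrix.conjTranspose_fromRows_eq_fromCols_conjTranspose]
      · simp [N, e, Matrix.conjTranspose_fromRows_eq_fromCols_conjTranspose]
    haveI : Invertible (1 : Matrix (Fin q) (Fin q) ℂ) := invertibleOne
    rw [← Matrix.posSemidef_submatrix_equiv e, hsub,
      Matrix.PosDef.fromBlocks₂₂ _ _ Matrix.PosDef.one]
    rw [inv_one, Matrix.mul_one,
      Matrix.conjTranspose_fromRows_eq_fromCols_conjTranspose,
      Matrix.fromRows_mul_fromCols, Matrix.conjTranspose_conjTranspose]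
    have hsub2 : Matrix.fromBlocks S X Xᴴ T -
        Matrix.fromBlocks (A * Aᴴ) (A * B) (Bᴴ * Aᴴ) (Bᴴ * B) =
        Matrix.fromBlocks (S - A * Aᴴ) (X - A * B) (Xᴴ - Bᴴ * Aᴴ) (T - Bᴴ * B) := by
      ext (i | i) (j | j) <;> simp
    rw [hsub2]
  constructor
  · rintro rfl
    refine ⟨A * Aᴴ, Bᴴ * B, Matrix.posSemidef_self_mul_conjTranspose A,
      Matrix.posSemidef_conjTranspose_mul_self B, ?_, by simp⟩
    rw [key]
    simp only [sub_self]
    simpa using (Matrix.PosSemidef.zero :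
      (0 : Matrix (Fin p ⊕ Fin r) (Fin p ⊕ Fin r) ℂ).PosSemidef)
  · rintro ⟨S, T, _, _, hPSD, htr⟩
    rw [key] at hPSD
    set M := Matrix.fromBlocks (S - A * Aᴴ) (X - A * B) (Xᴴ - Bᴴ * Aᴴ) (T - Bᴴ * B) with hM
    obtain ⟨L, hL⟩ : ∃ L : Matrix (Fin p ⊕ Fin r) (Fin p ⊕ Fin r) ℂ, M = Lᴴ * L := by
      open scoped MatrixOrder in
      exact CStarAlgebra.nonneg_iff_eq_star_mul_self.mp hPSD.nonneg
    -- entries of `M` in terms of `L`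
    have hMe : ∀ i j, M i j = ∑ k, (starRingEnd ℂ) (L k i) * L k j := by
      intro i j
      rw [hL, Matrix.mul_apply]
      simp [Matrix.conjTranspose_apply]
    -- trace of the top-left block
    have htr' : ((S - A * Aᴴ).trace).re =
        ∑ i, ∑ k, Complex.normSq (L k (Sum.inl i)) := by
      rw [Matrix.trace, Complex.re_sum]
      refine Finset.sum_congr rfl fun i _ => ?_
      have : (S - A * Aᴴ) i i = M (Sum.inl i) (Sum.inl i) := by simp [hM]
      rw [Matrix.diag_apply, this, hMe, Complex.re_sum]
      refine Finset.sum_congr rfl fun k _ => ?_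
      rw [← Complex.normSq_eq_conj_mul_self]
      simp
    -- all entries `L k (Sum.inl i)` vanish
    have hzero : ∀ k i, L k (Sum.inl i) = 0 := by
      have hle : ∑ i, ∑ k, Complex.normSq (L k (Sum.inl i)) ≤ 0 := htr' ▸ htr
      have hnn : ∀ i ∈ Finset.univ, (0:ℝ) ≤ ∑ k, Complex.normSq (L k (Sum.inl i)) :=
        fun i _ => Finset.sum_nonneg fun k _ => Complex.normSq_nonneg _
      have heq0 := le_antisymm hle (Finset.sum_nonneg hnn)
      intro k i
      have hi := (Finset.sum_eq_zero_iff_of_nonneg hnn).mp heq0 i (Finset.mem_univ i)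
      have hk := (Finset.sum_eq_zero_iff_of_nonneg
        (fun k _ => Complex.normSq_nonneg (L k (Sum.inl i)))).mp hi k (Finset.mem_univ k)
      exact Complex.normSq_eq_zero.mp hk
    -- hence the off-diagonal block vanishes
    have : X - A * B = 0 := by
      ext i j
      have : (X - A * B) i j = M (Sum.inl i) (Sum.inr j) := by simp [hM]
      rw [Matrix.zero_apply, this, hMe]
      refine Finset.sum_eq_zero fun k _ => ?_
      rw [hzero k i]
      simp
    exact sub_eq_zero.mp this
end

section
/- Suppose the block matrix [[S, X, A],[Xᴴ, T, Bᴴ],[Aᴴ, B, I]] is Hermitian positive semidefinite and Tr(S) ≤ Tr(AAᴴ). Then X = AB. -/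
open Matrix ComplexOrder

/-- 'If' direction of the bilinear-product LMI characterization: if the block matrix
`[[S, X, A],[Xᴴ, T, Bᴴ],[Aᴴ, B, I]]` is Hermitian PSD and `Tr S ≤ Tr (A Aᴴ)`,
then `X = A * B`. -/
theorem stmt_5 (p q r : ℕ)
    (S : Matrix (Fin p) (Fin p) ℂ) (T : Matrix (Fin r) (Fin r) ℂ)
    (X : Matrix (Fin p) (Fin r) ℂ) (A : Matrix (Fin p) (Fin q) ℂ)
    (B : Matrix (Fin q) (Fin r) ℂ)
    (hS : S.IsHermitian) (hT : T.IsHermitian)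
    (hPSD : (Matrix.fromBlocks S (Matrix.fromCols X A)
        (Matrix.fromRows Xᴴ Aᴴ)
        (Matrix.fromBlocks T Bᴴ B (1 : Matrix (Fin q) (Fin q) ℂ))).PosSemidef)
    (htr : (S.trace).re ≤ ((A * Aᴴ).trace).re) :
    X = A * B := by
  obtain ⟨L, hL⟩ : ∃ L, _ = Lᴴ * L := by
    open scoped MatrixOrder in
    obtain ⟨L, hL⟩ := CStarAlgebra.nonneg_iff_eq_star_mul_self.mp hPSD.nonneg
    exact ⟨L, hL⟩
  set L1 : Matrix (Fin p ⊕ (Fin r ⊕ Fin q)) (Fin p) ℂ := fun k i => L k (Sum.inl i) with hL1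
  set L2 : Matrix (Fin p ⊕ (Fin r ⊕ Fin q)) (Fin r) ℂ := fun k j => L k (Sum.inr (Sum.inl j)) with hL2
  set L3 : Matrix (Fin p ⊕ (Fin r ⊕ Fin q)) (Fin q) ℂ := fun k j => L k (Sum.inr (Sum.inr j)) with hL3
  have hS' : S = L1ᴴ * L1 := by
    ext i j
    have h := congrFun (congrFun hL (Sum.inl i)) (Sum.inl j)
    simp only [Matrix.mul_apply, Matrix.conjTranspose_apply]
    simpa [Matrix.fromBlocks, Matrix.mul_apply, Matrix.conjTranspose_apply, hL1, hL2, hL3, Fintype.sum_sum_type] using h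
  have hX : X = L1ᴴ * L2 := by
    ext i j
    have h := congrFun (congrFun hL (Sum.inl i)) (Sum.inr (Sum.inl j))
    simp only [Matrix.mul_apply, Matrix.conjTranspose_apply]
    simpa [Matrix.fromBlocks, Matrix.fromCols, Matrix.mul_apply,
      Matrix.conjTranspose_apply, hL1, hL2, hL3, Fintype.sum_sum_type] using h
  have hA : A = L1ᴴ * L3 := by
    ext i j
    have h := congrFun (congrFun hL (Sum.inl i)) (Sum.inr (Sum.inr j))
    simp only [Matrix.mul_apply, Matrix.conjTranspose_apply]
    simpa [Matrix.fromBlocks, Matrix.fromCols, Matrix.mul_apply,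
      Matrix.conjTranspose_apply, hL1, hL2, hL3, Fintype.sum_sum_type] using h
  have hB : B = L3ᴴ * L2 := by
    ext i j
    have h := congrFun (congrFun hL (Sum.inr (Sum.inr i))) (Sum.inr (Sum.inl j))
    simp only [Matrix.mul_apply, Matrix.conjTranspose_apply]
    simpa [Matrix.fromBlocks, Matrix.mul_apply, Matrix.conjTranspose_apply, hL1, hL2, hL3, Fintype.sum_sum_type] using h
  have hI : (1 : Matrix (Fin q) (Fin q) ℂ) = L3ᴴ * L3 := by
    ext i j
    have h := congrFun (congrFun hL (Sum.inr (Sum.inr i))) (Sum.inr (Sum.inr j))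
    simp only [Matrix.mul_apply, Matrix.conjTranspose_apply]
    simpa [Matrix.fromBlocks, Matrix.mul_apply, Matrix.conjTranspose_apply, hL1, hL2, hL3, Fintype.sum_sum_type] using h
  set K : Matrix (Fin p ⊕ (Fin r ⊕ Fin q)) (Fin p) ℂ := L1 - L3 * (L3ᴴ * L1) with hK
  have hKK : Kᴴ * K = S - A * Aᴴ := by
    have h1 : Kᴴ = L1ᴴ - (L1ᴴ * L3) * L3ᴴ := by
      simp [hK, Matrix.conjTranspose_sub, Matrix.conjTranspose_mul, Matrix.mul_assoc]
    rw [h1, hK, hS', hA, Matrix.conjTranspose_mul]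
    rw [Matrix.sub_mul, Matrix.mul_sub, Matrix.mul_sub]
    have h2 : L1ᴴ * L3 * L3ᴴ * (L3 * (L3ᴴ * L1)) = L1ᴴ * L3 * (L3ᴴ * L1) := by
      rw [Matrix.mul_assoc (L1ᴴ * L3) L3ᴴ, ← Matrix.mul_assoc L3ᴴ L3, ← hI, Matrix.one_mul]
    rw [h2]
    simp only [Matrix.mul_assoc, sub_self, sub_zero, Matrix.conjTranspose_conjTranspose]
  have hpsd : (Kᴴ * K).PosSemidef := Matrix.posSemidef_conjTranspose_mul_self K
  have htr0 : ((Kᴴ * K).trace).re ≤ 0 := by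
    rw [hKK, Matrix.trace_sub]
    simpa using sub_nonpos.mpr htr
  have hre : ((Kᴴ * K).trace).re = ∑ i, ∑ k, Complex.normSq (K k i) := by
    simp only [Matrix.trace, Matrix.diag, Matrix.mul_apply, Matrix.conjTranspose_apply]
    rw [Complex.re_sum]
    congr 1
    ext i
    rw [Complex.re_sum]
    congr 1
    ext k
    simp [Complex.normSq_apply]
  have hK0 : K = 0 := by
    have hsum : ∑ i, ∑ k, Complex.normSq (K k i) = 0 := by
      have h1 : (0:ℝ) ≤ ∑ i, ∑ k, Complex.normSq (K k i) :=
        Finset.sum_nonneg fun i _ => Finset.sum_nonneg fun k _ => Complex.normSq_nonneg _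
      linarith [hre ▸ htr0]
    ext k i
    have := (Finset.sum_eq_zero_iff_of_nonneg
      (fun i _ => Finset.sum_nonneg fun k _ => Complex.normSq_nonneg (K k i))).mp hsum i
      (Finset.mem_univ i)
    have := (Finset.sum_eq_zero_iff_of_nonneg
      (fun k _ => Complex.normSq_nonneg (K k i))).mp this k (Finset.mem_univ k)
    simpa using Complex.normSq_eq_zero.mp this
  have hL1eq : L1 = L3 * (L3ᴴ * L1) := by
    have h0 : L1 - L3 * (L3ᴴ * L1) = 0 := hK ▸ hK0
    exact sub_eq_zero.mp h0
  calc X = L1ᴴ * L2 := hX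
    _ = (L3 * (L3ᴴ * L1))ᴴ * L2 := by rw [← hL1eq]
    _ = (L1ᴴ * L3) * (L3ᴴ * L2) := by
        simp [Matrix.conjTranspose_mul, Matrix.mul_assoc]
    _ = A * B := by rw [← hA, ← hB]
end

section
/- Let P = [[q·I_n, 0],[0, -qε² - c]] with q ≥ 0, ε > 0, c > 0, and G = [I_n, ḡ] ∈ ℂ^{n×(n+1)} for ḡ ∈ ℂ^n. If P - Gᴴ X̃ G ⪰ 0 for some Hermitian X̃ ∈ ℍ^n, then for all Δg ∈ ℂ^n with ‖Δg‖₂ ≤ ε, it holds that (ḡ+Δg)ᴴ X̃ (ḡ+Δg) ≤ -c. -/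
open Matrix ComplexOrder

/-- LMI sufficient condition for the worst-case robust QoS constraint: if
`P - Gᴴ X̃ G ⪰ 0` with `P = [[q I, 0],[0, -qε² - c]]` and `G = [I, ḡ]`, then
`(ḡ+Δg)ᴴ X̃ (ḡ+Δg) ≤ -c` for all `‖Δg‖ ≤ ε`. -/
theorem stmt_14 (n : ℕ) (hn : 1 ≤ n) (q ε c : ℝ) (hq : 0 ≤ q) (hε : 0 < ε) (hc : 0 < c)
    (gbar : Fin n → ℂ) (Xt : Matrix (Fin n) (Fin n) ℂ) (hXt : Xt.IsHermitian)
    (hPSD : (Matrix.fromBlocks ((q : ℂ) • (1 : Matrix (Fin n) (Fin n) ℂ)) 0 0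
          (Matrix.of fun _ _ : Fin 1 => ((-(q * ε ^ 2) - c : ℝ) : ℂ)) -
        (Matrix.fromCols (1 : Matrix (Fin n) (Fin n) ℂ) (Matrix.replicateCol (Fin 1) gbar))ᴴ *
          Xt * Matrix.fromCols (1 : Matrix (Fin n) (Fin n) ℂ)
            (Matrix.replicateCol (Fin 1) gbar)).PosSemidef) :
    ∀ Δg : Fin n → ℂ, Real.sqrt (∑ i, ‖Δg i‖ ^ 2) ≤ ε →
      (star (gbar + Δg) ⬝ᵥ Xt.mulVec (gbar + Δg)).re ≤ -c := by
  intro Δg hΔg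
  set G := Matrix.fromCols (1 : Matrix (Fin n) (Fin n) ℂ) (Matrix.replicateCol (Fin 1) gbar) with hG
  set v : Fin n ⊕ Fin 1 → ℂ := Sum.elim Δg (fun _ => 1) with hv
  have h := hPSD.dotProduct_mulVec_nonneg v
  have hGv : G *ᵥ v = gbar + Δg := by
    rw [hG, hv, Matrix.fromCols_mulVec_sumElim, Matrix.one_mulVec]
    ext i
    simp [Matrix.mulVec, dotProduct, Matrix.replicateCol, add_comm]
  have hB : star v ⬝ᵥ (Gᴴ * Xt * G) *ᵥ v = star (gbar + Δg) ⬝ᵥ Xt *ᵥ (gbar + Δg) := by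
    rw [← Matrix.mulVec_mulVec, ← Matrix.mulVec_mulVec, Matrix.dotProduct_mulVec,
      ← Matrix.star_mulVec, hGv]
  have hconj : ∀ i, (starRingEnd ℂ) (Δg i) * Δg i = ((‖Δg i‖ ^ 2 : ℝ) : ℂ) := by
    intro i
    rw [mul_comm, Complex.mul_conj, Complex.normSq_eq_norm_sq]
  have hA : star v ⬝ᵥ (Matrix.fromBlocks ((q : ℂ) • (1 : Matrix (Fin n) (Fin n) ℂ)) 0 0
          (Matrix.of fun _ _ : Fin 1 => ((-(q * ε ^ 2) - c : ℝ) : ℂ))) *ᵥ v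
      = (q * ∑ i, ‖Δg i‖ ^ 2 + (-(q * ε ^ 2) - c) : ℝ) := by
    rw [hv, Function.star_sumElim, Matrix.fromBlocks_mulVec, sumElim_dotProduct_sumElim]
    simp only [Matrix.zero_mulVec, add_zero, zero_add, Matrix.smul_mulVec,
      Matrix.one_mulVec, dotProduct_smul, dotProduct, Matrix.mulVec,
      Pi.star_apply, Complex.star_def, star_one, one_mul, Matrix.of_apply, mul_one,
      Finset.univ_unique, Finset.sum_const, Finset.card_singleton, one_smul, smul_eq_mul]
    have key : ∀ x, (starRingEnd ℂ) (Δg x) * ((q : ℂ) * Δg x)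
        = (q : ℂ) * ((‖Δg x‖ ^ 2 : ℝ) : ℂ) := fun x => by
      rw [mul_left_comm, hconj]
    simp only [Function.comp, Sum.elim_inl, Sum.elim_inr, Pi.smul_apply, smul_eq_mul,
      mul_one, Finset.sum_singleton, key, ← Finset.mul_sum, ← Complex.ofReal_sum]
    push_cast
    ring
  rw [Matrix.sub_mulVec, dotProduct_sub, hB, hA] at h
  have h' : (star (gbar + Δg) ⬝ᵥ Xt *ᵥ (gbar + Δg)).re
      ≤ q * ∑ i, ‖Δg i‖ ^ 2 + (-(q * ε ^ 2) - c) := by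
    have := (Complex.le_def.mp h).1
    rw [Complex.zero_re, Complex.sub_re, Complex.ofReal_re, sub_nonneg] at this
    exact this
  have hS : ∑ i, ‖Δg i‖ ^ 2 ≤ ε ^ 2 := by
    have h0 : 0 ≤ ∑ i, ‖Δg i‖ ^ 2 := Finset.sum_nonneg fun i _ => sq_nonneg _
    nlinarith [Real.sq_sqrt h0, Real.sqrt_nonneg (∑ i, ‖Δg i‖ ^ 2)]
  nlinarith [mul_le_mul_of_nonneg_left hS hq]
end

section
/- Let G = [I_n, ḡ] ∈ ℂ^{n×(n+1)} with ḡ ∈ ℂ^n, and let A ∈ ℍ^{n+1} be Hermitian PSD. Suppose A(P - GᴴX̃G) = 0 where P = [[qI_n, 0],[0, -qε² - c]], q > 0, and qI_n - X̃ is nonsingular (X̃ ∈ ℍ^n Hermitian). Then rank(G A Gᴴ) ≤ 1. -/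
open Matrix ComplexOrder

/-- Rank-one step: from complementary slackness `A (P - Gᴴ X̃ G) = 0` with `A ⪰ 0`,
`q I - X̃` nonsingular, it follows that `rank(G A Gᴴ) ≤ 1`. -/
theorem stmt_17 (n : ℕ) (q ε c : ℝ) (hq : 0 < q)
    (gbar : Fin n → ℂ)
    (A : Matrix (Fin n ⊕ Fin 1) (Fin n ⊕ Fin 1) ℂ) (hA : A.PosSemidef)
    (Xt : Matrix (Fin n) (Fin n) ℂ) (hXt : Xt.IsHermitian)
    (hinv : IsUnit ((q : ℂ) • (1 : Matrix (Fin n) (Fin n) ℂ) - Xt).det)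
    (hcomp : A * (Matrix.fromBlocks ((q : ℂ) • (1 : Matrix (Fin n) (Fin n) ℂ)) 0 0
          (Matrix.of fun _ _ : Fin 1 => ((-(q * ε ^ 2) - c : ℝ) : ℂ)) -
        (Matrix.fromCols (1 : Matrix (Fin n) (Fin n) ℂ) (Matrix.replicateCol (Fin 1) gbar))ᴴ *
          Xt * Matrix.fromCols (1 : Matrix (Fin n) (Fin n) ℂ)
            (Matrix.replicateCol (Fin 1) gbar)) = 0) :
    (Matrix.fromCols (1 : Matrix (Fin n) (Fin n) ℂ) (Matrix.replicateCol (Fin 1) gbar) * A *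
        (Matrix.fromCols (1 : Matrix (Fin n) (Fin n) ℂ)
          (Matrix.replicateCol (Fin 1) gbar))ᴴ).rank ≤ 1 := by
  set G : Matrix (Fin n) (Fin n ⊕ Fin 1) ℂ :=
    Matrix.fromCols (1 : Matrix (Fin n) (Fin n) ℂ) (Matrix.replicateCol (Fin 1) gbar) with hG
  set R : Matrix (Fin n ⊕ Fin 1) (Fin n) ℂ :=
    Matrix.fromRows (1 : Matrix (Fin n) (Fin n) ℂ) (0 : Matrix (Fin 1) (Fin n) ℂ) with hR
  set P : Matrix (Fin n ⊕ Fin 1) (Fin n ⊕ Fin 1) ℂ :=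
    Matrix.fromBlocks ((q : ℂ) • (1 : Matrix (Fin n) (Fin n) ℂ)) 0 0
      (Matrix.of fun _ _ : Fin 1 => ((-(q * ε ^ 2) - c : ℝ) : ℂ)) with hP
  -- G * R = 1
  have hGR : G * R = 1 := by
    rw [hG, hR, Matrix.fromCols_mul_fromRows]
    simp
  -- P * R = q • R
  have hPR : P * R = (q : ℂ) • R := by
    rw [hP, hR, Matrix.fromBlocks_mul_fromRows]
    ext (i | i) j <;> simp
  -- from hcomp : A * P = A * Gᴴ * Xt * G
  have hAP : A * P = A * Gᴴ * Xt * G := by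
    have h := hcomp
    rw [Matrix.mul_sub, sub_eq_zero] at h
    rw [h]; simp only [Matrix.mul_assoc]
  -- G A Gᴴ Xt = q • (G A R)
  have h1 : G * A * Gᴴ * Xt = (q : ℂ) • (G * A * R) := by
    calc G * A * Gᴴ * Xt = G * A * Gᴴ * Xt * (G * R) := by rw [hGR, Matrix.mul_one]
      _ = G * (A * Gᴴ * Xt * G) * R := by
          simp only [Matrix.mul_assoc]
      _ = G * (A * P) * R := by rw [← hAP]
      _ = G * A * (P * R) := by simp only [Matrix.mul_assoc]
      _ = G * A * ((q : ℂ) • R) := by rw [hPR]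
      _ = (q : ℂ) • (G * A * R) := by rw [Matrix.mul_smul]
  -- key identity
  have key : (G * A * Gᴴ) * ((q : ℂ) • (1 : Matrix (Fin n) (Fin n) ℂ) - Xt)
      = (G * A) * ((q : ℂ) • (Gᴴ - R)) := by
    simp only [Matrix.mul_sub, Matrix.mul_smul, Matrix.mul_one, smul_sub]
    rw [h1]
  -- the right-hand side has rank ≤ 1
  have hD : (q : ℂ) • (Gᴴ - R) =
      Matrix.fromRows (0 : Matrix (Fin n) (Fin n) ℂ) ((q : ℂ) • (Matrix.replicateCol (Fin 1) gbar)ᴴ) := by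
    rw [hG, hR, Matrix.conjTranspose_fromCols_eq_fromRows_conjTranspose]
    ext (i | i) j <;> simp [Matrix.fromRows_apply_inl, Matrix.fromRows_apply_inr]
  have hrank1 : ((G * A) * ((q : ℂ) • (Gᴴ - R))).rank ≤ 1 := by
    rw [hD]
    have hfac : Matrix.fromRows (0 : Matrix (Fin n) (Fin n) ℂ)
        ((q : ℂ) • (Matrix.replicateCol (Fin 1) gbar)ᴴ) =
        Matrix.fromRows (0 : Matrix (Fin n) (Fin 1) ℂ) (1 : Matrix (Fin 1) (Fin 1) ℂ) *
          ((q : ℂ) • (Matrix.replicateCol (Fin 1) gbar)ᴴ) := by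
      rw [Matrix.fromRows_mul]
      simp
    rw [hfac, ← Matrix.mul_assoc]
    calc (G * A * Matrix.fromRows (0 : Matrix (Fin n) (Fin 1) ℂ) (1 : Matrix (Fin 1) (Fin 1) ℂ) * ((q : ℂ) • (Matrix.replicateCol (Fin 1) gbar)ᴴ)).rank
        ≤ ((q : ℂ) • (Matrix.replicateCol (Fin 1) gbar)ᴴ).rank := Matrix.rank_mul_le_right _ _
      _ ≤ Fintype.card (Fin 1) := Matrix.rank_le_card_height _
      _ = 1 := by simp
  -- conclude using invertibility
  have hfin := Matrix.rank_mul_eq_left_of_isUnit_det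
    ((q : ℂ) • (1 : Matrix (Fin n) (Fin n) ℂ) - Xt) (G * A * Gᴴ) hinv
  rw [← hfin, key]
  exact hrank1
end
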